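/- Let V be an isometry defining an irreducible quantum Markov chain with system dimension d and environment dimension k, with stationary state ρˢˢ. Then: (a) the fixed point space of the transition channel is trivial, i.e. every d×d complex matrix X with T_V(X) = X is a scalar multiple of the identity matrix; (b) the linear map Id − T_V maps the subspace S := { X : d×d complex matrix with tr(ρˢˢ X) = 0 } bijectively onto itself. -/

import Mathlib

open Matrix Filter
open scoped Kronecker ComplexConjugate ComplexOrder

noncomputable section

namespace QMCPaper

/-- The `j`-th block (Kraus operator style) of a `(d₁·k)×d₂` matrix. -/
def blk {d₁ d₂ k : ℕ} (V : Matrix (Fin d₁ × Fin k) (Fin d₂) ℂ) (j : Fin k) :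
    Matrix (Fin d₁) (Fin d₂) ℂ :=
  fun a b => V (a, j) b

/-- The Kraus operators of a QMC isometry. -/
def kraus {d k : ℕ} (V : Matrix (Fin d × Fin k) (Fin d) ℂ) (j : Fin k) :
    Matrix (Fin d) (Fin d) ℂ :=
  blk V j

/-- The transition channel `T_V(X) = Vᴴ (X ⊗ 1_k) V = Σ_j K_jᴴ X K_j`. -/
def chan {d k : ℕ} (V : Matrix (Fin d × Fin k) (Fin d) ℂ)
    (X : Matrix (Fin d) (Fin d) ℂ) : Matrix (Fin d) (Fin d) ℂ :=
  ∑ j : Fin k, (kraus V j)ᴴ * X * kraus V j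

/-- The predual channel `T_{V*}(ρ) = Σ_j K_j ρ K_jᴴ`. -/
def predual {d k : ℕ} (V : Matrix (Fin d × Fin k) (Fin d) ℂ)
    (ρ : Matrix (Fin d) (Fin d) ℂ) : Matrix (Fin d) (Fin d) ℂ :=
  ∑ j : Fin k, kraus V j * ρ * (kraus V j)ᴴ

/-- A state: positive semidefinite matrix of trace one. -/
def IsState {d : ℕ} (ρ : Matrix (Fin d) (Fin d) ℂ) : Prop :=
  ρ.PosSemidef ∧ ρ.trace = 1

/-- `V` is an isometry defining an irreducible QMC with (unique, faithful) stationary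
state `ρss`. -/
def IsIrreducible {d k : ℕ} (V : Matrix (Fin d × Fin k) (Fin d) ℂ)
    (ρss : Matrix (Fin d) (Fin d) ℂ) : Prop :=
  Vᴴ * V = 1 ∧ IsState ρss ∧ predual V ρss = ρss ∧ ρss.PosDef ∧
    ∀ ρ, IsState ρ → predual V ρ = ρ → ρ = ρss

/-- For a word `i = (i_0, …, i_{n-1})`, the operator `K_i = K_{i_{n-1}} ⋯ K_{i_0}`. -/
def krausWord {d k : ℕ} (V : Matrix (Fin d × Fin k) (Fin d) ℂ) {n : ℕ}
    (i : Fin n → Fin k) : Matrix (Fin d) (Fin d) ℂ :=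
  ((List.ofFn i).reverse.map (kraus V)).prod

/-- The output state at time `n` with initial system state `ρ`:
its `(i,j)` entry is `tr(K_i ρ K_jᴴ)`. -/
def outState {d k : ℕ} (V : Matrix (Fin d × Fin k) (Fin d) ℂ)
    (ρ : Matrix (Fin d) (Fin d) ℂ) (n : ℕ) :
    Matrix (Fin n → Fin k) (Fin n → Fin k) ℂ :=
  fun i j => (krausWord V i * ρ * (krausWord V j)ᴴ).trace

/-- Output equivalence (with given initial states): equality of all output states. -/
def OutputEquiv {d₁ d₂ k : ℕ}
    (V₁ : Matrix (Fin d₁ × Fin k) (Fin d₁) ℂ) (ρ₁ : Matrix (Fin d₁) (Fin d₁) ℂ)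
    (V₂ : Matrix (Fin d₂ × Fin k) (Fin d₂) ℂ) (ρ₂ : Matrix (Fin d₂) (Fin d₂) ℂ) : Prop :=
  ∀ n : ℕ, 1 ≤ n → ∀ i j : Fin n → Fin k,
    (krausWord V₁ i * ρ₁ * (krausWord V₁ j)ᴴ).trace =
      (krausWord V₂ i * ρ₂ * (krausWord V₂ j)ᴴ).trace

/-- A (possibly rectangular) unitary matrix. -/
def IsUnitaryMat {d₁ d₂ : ℕ} (W : Matrix (Fin d₁) (Fin d₂) ℂ) : Prop :=
  Wᴴ * W = 1 ∧ W * Wᴴ = 1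

end QMCPaper

namespace QMCPaper

section Aux

variable {d k : ℕ}

local notation "Mat" => Matrix (Fin d) (Fin d) ℂ

lemma sum_kraus_conj_mul (V : Matrix (Fin d × Fin k) (Fin d) ℂ) :
    ∑ j : Fin k, (kraus V j)ᴴ * kraus V j = Vᴴ * V := by
  ext a b
  simp only [Matrix.sum_apply, Matrix.mul_apply, conjTranspose_apply, kraus, blk]
  rw [Fintype.sum_prod_type, Finset.sum_comm]

lemma chan_one (V : Matrix (Fin d × Fin k) (Fin d) ℂ) (hV : Vᴴ * V = 1) :
    chan V (1 : Mat) = 1 := by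
  have : chan V (1 : Mat) = ∑ j : Fin k, (kraus V j)ᴴ * kraus V j := by
    simp [chan]
  rw [this, sum_kraus_conj_mul, hV]

lemma trace_chan (V : Matrix (Fin d × Fin k) (Fin d) ℂ) (ρ X : Mat) :
    (ρ * chan V X).trace = (predual V ρ * X).trace := by
  simp only [chan, predual, Matrix.mul_sum, Matrix.sum_mul, trace_sum]
  refine Finset.sum_congr rfl fun j _ => ?_
  rw [show ρ * ((kraus V j)ᴴ * X * kraus V j)
      = (ρ * (kraus V j)ᴴ * X) * kraus V j by simp only [Matrix.mul_assoc],
    trace_mul_comm]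
  simp only [Matrix.mul_assoc]

lemma predual_conjTranspose (V : Matrix (Fin d × Fin k) (Fin d) ℂ) (Y : Mat) :
    predual V Yᴴ = (predual V Y)ᴴ := by
  simp [predual, conjTranspose_sum, conjTranspose_mul, Matrix.mul_assoc]

/-- The channel as a linear map. -/
def chanL (V : Matrix (Fin d × Fin k) (Fin d) ℂ) : Mat →ₗ[ℂ] Mat where
  toFun := chan V
  map_add' X Y := by
    simp [chan, Matrix.mul_add, Matrix.add_mul, Finset.sum_add_distrib]
  map_smul' c X := by
    simp [chan, Matrix.mul_smul, Matrix.smul_mul, Finset.smul_sum]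

@[simp] lemma chanL_apply (V : Matrix (Fin d × Fin k) (Fin d) ℂ) (X : Mat) :
    chanL V X = chan V X := rfl

/-- The predual channel as a linear map. -/
def predualL (V : Matrix (Fin d × Fin k) (Fin d) ℂ) : Mat →ₗ[ℂ] Mat where
  toFun := predual V
  map_add' X Y := by
    simp [predual, Matrix.mul_add, Matrix.add_mul, Finset.sum_add_distrib]
  map_smul' c X := by
    simp [predual, Matrix.mul_smul, Matrix.smul_mul, Finset.smul_sum]

@[simp] lemma predualL_apply (V : Matrix (Fin d × Fin k) (Fin d) ℂ) (X : Mat) :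
    predualL V X = predual V X := rfl

lemma posSemidef_real_smul {n : ℕ} {A : Matrix (Fin n) (Fin n) ℂ} (hA : A.PosSemidef)
    {r : ℝ} (hr : 0 ≤ r) : (((r : ℂ)) • A).PosSemidef := by
  constructor
  · show ((r : ℂ) • A)ᴴ = (r : ℂ) • A
    rw [conjTranspose_smul, hA.1.eq]
    norm_num
  · intro x
    have h := hA.2 x
    have e : (x.sum fun i xi => x.sum fun j xj => star xi * (((r : ℂ)) • A) i j * xj)
        = (r : ℂ) * x.sum fun i xi => x.sum fun j xj => star xi * A i j * xj := by
      simp only [Finsupp.mul_sum, Matrix.smul_apply, smul_eq_mul]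
      refine Finsupp.sum_congr fun i _ => Finsupp.sum_congr fun j _ => ?_
      ring
    rw [e]
    exact mul_nonneg (Complex.zero_le_real.mpr hr) h

lemma posSemidef_real_smul_one {n : ℕ} {r : ℝ} (hr : 0 ≤ r) :
    (((r : ℂ)) • (1 : Matrix (Fin n) (Fin n) ℂ)).PosSemidef :=
  posSemidef_real_smul Matrix.PosSemidef.one hr

lemma exists_bound {n : ℕ} {H : Matrix (Fin n) (Fin n) ℂ} (hH : H.IsHermitian) :
    ∃ c : ℝ, 0 < c ∧ ((c : ℂ) • 1 + H).PosSemidef := by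
  classical
  refine ⟨(∑ i, |hH.eigenvalues i|) + 1, by positivity, ?_⟩
  set c : ℝ := (∑ i, |hH.eigenvalues i|) + 1 with hc
  have hbound : ∀ i, 0 ≤ c + hH.eigenvalues i := by
    intro i
    have h1 : |hH.eigenvalues i| ≤ ∑ i, |hH.eigenvalues i| :=
      Finset.single_le_sum (f := fun i => |hH.eigenvalues i|)
        (fun i _ => abs_nonneg _) (Finset.mem_univ i)
    have := neg_abs_le (hH.eigenvalues i)
    simp only [hc]; linarith
  have hU : (hH.eigenvectorUnitary : Matrix (Fin n) (Fin n) ℂ) *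
      (hH.eigenvectorUnitary : Matrix (Fin n) (Fin n) ℂ)ᴴ = 1 := by
    simpa [star_eq_conjTranspose] using
      (Matrix.mem_unitaryGroup_iff.mp hH.eigenvectorUnitary.2)
  have key : (c : ℂ) • 1 + H =
      (hH.eigenvectorUnitary : Matrix (Fin n) (Fin n) ℂ) *
        (Matrix.diagonal (fun i => ((c + hH.eigenvalues i : ℝ) : ℂ))) *
        (hH.eigenvectorUnitary : Matrix (Fin n) (Fin n) ℂ)ᴴ := by
    conv_lhs => rw [hH.spectral_theorem]
    rw [show (Matrix.diagonal (fun i => ((c + hH.eigenvalues i : ℝ) : ℂ)))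
        = (c : ℂ) • 1 + Matrix.diagonal (RCLike.ofReal ∘ hH.eigenvalues) by
      ext i j
      by_cases hij : i = j
      · subst hij
        simp [Matrix.one_apply_eq, Matrix.diagonal_apply_eq]
      · simp [Matrix.diagonal_apply_ne _ hij, Matrix.one_apply_ne hij]]
    rw [Unitary.conjStarAlgAut_apply, Matrix.mul_add, Matrix.add_mul, Matrix.mul_smul, Matrix.smul_mul, Matrix.mul_one,
      star_eq_conjTranspose] at *
    rw [hU]
  rw [key]
  exact (Matrix.posSemidef_diagonal_iff.mpr
    (fun i => Complex.zero_le_real.mpr (hbound i))).mul_mul_conjTranspose_same _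

lemma exists_lower {n : ℕ} {A : Matrix (Fin n) (Fin n) ℂ} (hA : A.PosDef) :
    ∃ δ : ℝ, 0 < δ ∧ (A - (δ : ℂ) • 1).PosSemidef := by
  classical
  rcases Nat.eq_zero_or_pos n with h0 | hpos
  · subst h0
    refine ⟨1, one_pos, ⟨?_, ?_⟩⟩
    · ext i j; exact i.elim0
    · intro x; simp [Subsingleton.elim x 0]
  · haveI : Nonempty (Fin n) := Fin.pos_iff_nonempty.mp hpos
    have hH := hA.1
    set δ : ℝ := Finset.univ.inf' Finset.univ_nonempty hH.eigenvalues with hδdef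
    have hδpos : 0 < δ := by
      rw [hδdef, Finset.lt_inf'_iff]
      exact fun i _ => hA.eigenvalues_pos i
    refine ⟨δ, hδpos, ?_⟩
    have hbound : ∀ i, 0 ≤ hH.eigenvalues i - δ := fun i =>
      sub_nonneg.mpr (Finset.inf'_le _ (Finset.mem_univ i))
    have hU : (hH.eigenvectorUnitary : Matrix (Fin n) (Fin n) ℂ) *
        (hH.eigenvectorUnitary : Matrix (Fin n) (Fin n) ℂ)ᴴ = 1 := by
      simpa [star_eq_conjTranspose] using
        (Matrix.mem_unitaryGroup_iff.mp hH.eigenvectorUnitary.2)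
    have key : A - (δ : ℂ) • 1 =
        (hH.eigenvectorUnitary : Matrix (Fin n) (Fin n) ℂ) *
          (Matrix.diagonal (fun i => ((hH.eigenvalues i - δ : ℝ) : ℂ))) *
          (hH.eigenvectorUnitary : Matrix (Fin n) (Fin n) ℂ)ᴴ := by
      conv_lhs => rw [hH.spectral_theorem]
      rw [show (Matrix.diagonal (fun i => ((hH.eigenvalues i - δ : ℝ) : ℂ)))
          = Matrix.diagonal (RCLike.ofReal ∘ hH.eigenvalues) - (δ : ℂ) • 1 by
        ext i j
        by_cases hij : i = j
        · subst hij
          simp [Matrix.one_apply_eq, Matrix.diagonal_apply_eq]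
        · simp [Matrix.diagonal_apply_ne _ hij, Matrix.one_apply_ne hij]]
      rw [Unitary.conjStarAlgAut_apply, Matrix.mul_sub, Matrix.sub_mul, Matrix.mul_smul, Matrix.smul_mul, Matrix.mul_one,
        star_eq_conjTranspose] at *
      rw [hU]
    rw [key]
    exact (Matrix.posSemidef_diagonal_iff.mpr
      (fun i => Complex.zero_le_real.mpr (hbound i))).mul_mul_conjTranspose_same _

lemma exists_eps {n : ℕ} {A H : Matrix (Fin n) (Fin n) ℂ} (hA : A.PosDef)
    (hH : H.IsHermitian) (t : ℝ) :
    ∃ ε : ℝ, 0 < ε ∧ ε * |t| < 1 ∧ (A + (ε : ℂ) • H).PosSemidef := by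
  obtain ⟨c, hc, hcH⟩ := exists_bound hH
  obtain ⟨δ, hδ, hAδ⟩ := exists_lower hA
  set ε : ℝ := min (δ / c) (1 / (2 * (|t| + 1))) with hεdef
  have hεpos : 0 < ε := lt_min (by positivity) (by positivity)
  have hεt : ε * |t| < 1 := by
    have h1 : ε ≤ 1 / (2 * (|t| + 1)) := min_le_right _ _
    have h2 : ε * |t| ≤ (1 / (2 * (|t| + 1))) * |t| :=
      mul_le_mul_of_nonneg_right h1 (abs_nonneg t)
    have h3 : (1 / (2 * (|t| + 1))) * |t| < 1 := by
      rw [div_mul_eq_mul_div, div_lt_one (by positivity)]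
      nlinarith [abs_nonneg t]
    linarith
  have hεc : ε * c ≤ δ := by
    have h1 : ε ≤ δ / c := min_le_left _ _
    calc ε * c ≤ (δ / c) * c := mul_le_mul_of_nonneg_right h1 hc.le
    _ = δ := by field_simp
  refine ⟨ε, hεpos, hεt, ?_⟩
  have key : A + (ε : ℂ) • H =
      (A - (δ : ℂ) • 1) + (((δ - ε * c : ℝ) : ℂ) • 1 + (ε : ℂ) • ((c : ℂ) • 1 + H)) := by
    have h1 : ((δ - ε * c : ℝ) : ℂ) = (δ : ℂ) - (ε : ℂ) * (c : ℂ) := by push_cast; ring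
    rw [h1]
    module
  rw [key]
  exact hAδ.add ((posSemidef_real_smul_one (by linarith)).add
    (posSemidef_real_smul hcH hεpos.le))

end Aux

end QMCPaper

namespace QMCPaper

section Aux2

variable {d k : ℕ}

local notation "Mat" => Matrix (Fin d) (Fin d) ℂ

/-- Hermitian fixed points of the predual are real multiples of `ρss`. -/
lemma predual_fixed_herm {V : Matrix (Fin d × Fin k) (Fin d) ℂ} {ρss : Mat}
    (h : IsIrreducible V ρss) {H : Mat} (hH : H.IsHermitian)
    (hfix : predual V H = H) : H = H.trace • ρss := by
  obtain ⟨hV, ⟨hpsd, htr⟩, hfixss, hpd, huniq⟩ := h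
  have htrH : (H.trace : ℂ) = ((H.trace.re : ℝ) : ℂ) := by
    have h1 : Hᴴ.trace = H.trace := by rw [hH.eq]
    rw [Matrix.trace_conjTranspose] at h1
    exact (Complex.conj_eq_iff_re.mp h1).symm
  set t : ℝ := H.trace.re with htdef
  obtain ⟨ε, hε, hεt, hPSD⟩ := exists_eps hpd hH t
  have hpos : 0 < 1 + ε * t := by
    have := neg_abs_le t
    have h2 : -(ε * |t|) ≤ ε * t := by nlinarith [abs_nonneg t]
    linarith
  set r : ℝ := (1 + ε * t)⁻¹ with hrdef
  have hrpos : 0 < r := by positivity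
  set σ : Mat := (r : ℂ) • (ρss + (ε : ℂ) • H) with hσdef
  have hσstate : IsState σ := by
    constructor
    · exact posSemidef_real_smul hPSD hrpos.le
    · rw [hσdef, Matrix.trace_smul, Matrix.trace_add, Matrix.trace_smul, htr, htrH]
      rw [smul_eq_mul, smul_eq_mul]
      push_cast
      rw [show (1 : ℂ) + (ε : ℂ) * (t : ℂ) = (((1 + ε * t : ℝ)) : ℂ) by push_cast; ring]
      rw [← Complex.ofReal_mul, inv_mul_cancel₀ hpos.ne']
      norm_num
  have hσfix : predual V σ = σ := by
    have h1 : predual V σ = predualL V σ := rfl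
    rw [h1, hσdef, _root_.map_smul, map_add, _root_.map_smul]
    simp only [predualL_apply, hfixss, hfix]
  have hσeq : σ = ρss := huniq σ hσstate hσfix
  -- unfold: (r:ℂ) • (ρss + ε • H) = ρss
  have h2 : ρss + (ε : ℂ) • H = (((1 + ε * t : ℝ)) : ℂ) • ρss := by
    have h3 := congrArg (fun M : Mat => (((1 + ε * t : ℝ)) : ℂ) • M) hσeq
    simp only [hσdef, smul_smul] at h3
    rw [← Complex.ofReal_mul, mul_inv_cancel₀ hpos.ne'] at h3
    simpa using h3
  have h4 : (ε : ℂ) • H = ((ε * t : ℝ) : ℂ) • ρss := by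
    have := h2
    push_cast at this ⊢
    rw [add_smul, one_smul] at this
    linear_combination (norm := module) this
  have h5 : H = ((t : ℝ) : ℂ) • ρss := by
    have hε' : (ε : ℂ) ≠ 0 := by exact_mod_cast hε.ne'
    have := congrArg (fun M : Mat => ((ε : ℂ))⁻¹ • M) h4
    simp only [smul_smul, inv_mul_cancel₀ hε', one_smul] at this
    rw [this]
    rw [Complex.ofReal_mul, ← mul_assoc, inv_mul_cancel₀ hε', one_mul]
  rw [htrH]
  exact h5

/-- All fixed points of the predual are multiples of `ρss`. -/
lemma predual_fixed {V : Matrix (Fin d × Fin k) (Fin d) ℂ} {ρss : Mat}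
    (h : IsIrreducible V ρss) {Y : Mat}
    (hfix : predual V Y = Y) : ∃ c : ℂ, Y = c • ρss := by
  have hfixH : predual V Yᴴ = Yᴴ := by rw [predual_conjTranspose, hfix]
  set H₁ : Mat := Y + Yᴴ with hH₁
  set H₂ : Mat := Complex.I • (Y - Yᴴ) with hH₂
  have hH₁herm : H₁.IsHermitian := by
    show H₁ᴴ = H₁
    simp [hH₁, Matrix.conjTranspose_add, add_comm]
  have hH₂herm : H₂.IsHermitian := by
    show H₂ᴴ = H₂
    simp only [hH₂, Matrix.conjTranspose_smul, Matrix.conjTranspose_sub,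
      Matrix.conjTranspose_conjTranspose, Complex.star_def, Complex.conj_I]
    rw [neg_smul, ← smul_neg]
    congr 1
    abel
  have hH₁fix : predual V H₁ = H₁ := by
    have : predual V H₁ = predualL V H₁ := rfl
    rw [this, hH₁, map_add]
    simp only [predualL_apply, hfix, hfixH]
  have hH₂fix : predual V H₂ = H₂ := by
    have : predual V H₂ = predualL V H₂ := rfl
    rw [this, hH₂, _root_.map_smul, map_sub]
    simp only [predualL_apply, hfix, hfixH]
  obtain ⟨c₁, e₁⟩ : ∃ c : ℂ, H₁ = c • ρss := ⟨_, predual_fixed_herm h hH₁herm hH₁fix⟩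
  obtain ⟨c₂, e₂⟩ : ∃ c : ℂ, H₂ = c • ρss := ⟨_, predual_fixed_herm h hH₂herm hH₂fix⟩
  refine ⟨(2 : ℂ)⁻¹ * (c₁ - Complex.I * c₂), ?_⟩
  have hY : Y = (2 : ℂ)⁻¹ • (H₁ - Complex.I • H₂) := by
    rw [hH₁, hH₂, smul_smul, Complex.I_mul_I]
    rw [show Y + Yᴴ - (-1 : ℂ) • (Y - Yᴴ) = (2 : ℂ) • Y by
      rw [neg_one_smul]; rw [two_smul]; abel]
    rw [smul_smul]
    norm_num
  rw [hY, e₁, e₂, smul_sub, smul_smul, smul_smul, smul_smul, ← sub_smul]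
  congr 1
  ring

end Aux2

end QMCPaper

namespace QMCPaper

section Aux3

variable {d k : ℕ}

local notation "Mat" => Matrix (Fin d) (Fin d) ℂ

/-- The obvious linear equivalence between matrices and functions on pairs. -/
def matEquivFun (d : ℕ) : Matrix (Fin d) (Fin d) ℂ ≃ₗ[ℂ] ((Fin d × Fin d) → ℂ) where
  toFun X := fun p => X p.1 p.2
  invFun f := Matrix.of fun i j => f (i, j)
  map_add' _ _ := rfl
  map_smul' _ _ := rfl
  left_inv _ := rfl
  right_inv _ := rfl

/-- A basis of the matrix space indexed by pairs. -/
def matBasis (d : ℕ) : Module.Basis (Fin d × Fin d) ℂ (Matrix (Fin d) (Fin d) ℂ) :=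
  Module.Basis.ofEquivFun (matEquivFun d)

lemma matBasis_apply (q : Fin d × Fin d) :
    matBasis d q = Matrix.single q.1 q.2 (1 : ℂ) := by
  classical
  ext i j
  rw [matBasis, Module.Basis.coe_ofEquivFun]
  simp only [matEquivFun, LinearEquiv.coe_symm_mk]
  show Function.update (0 : (Fin d × Fin d) → ℂ) q 1 (i, j) = _
  rcases q with ⟨qa, qb⟩
  rw [Function.update_apply]
  simp only [Matrix.single, Matrix.of_apply, Pi.zero_apply, Prod.mk.injEq]
  by_cases hA : i = qa ∧ j = qb
  · obtain ⟨rfl, rfl⟩ := hA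
    simp
  · rw [if_neg hA, if_neg (fun hB => hA ⟨hB.1.symm, hB.2.symm⟩)]

lemma matBasis_repr (X : Mat) (p : Fin d × Fin d) :
    (matBasis d).repr X p = X p.1 p.2 := by
  rw [matBasis, Module.Basis.ofEquivFun_repr_apply]
  rfl

lemma chan_entry (V : Matrix (Fin d × Fin k) (Fin d) ℂ) (a b c e : Fin d) :
    chan V (Matrix.single a b (1 : ℂ)) c e
      = ∑ j : Fin k, star (V (a, j) c) * V (b, j) e := by
  classical
  simp only [chan, Matrix.sum_apply, Matrix.mul_apply, Matrix.conjTranspose_apply,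
    Matrix.single, Matrix.of_apply, kraus, blk, mul_ite, ite_mul, mul_one, mul_zero,
    zero_mul, one_mul]
  refine Finset.sum_congr rfl fun j _ => ?_
  simp [ite_and, Finset.sum_ite_eq, Finset.sum_ite_eq', ite_mul, mul_ite]

lemma predual_entry (V : Matrix (Fin d × Fin k) (Fin d) ℂ) (a b c e : Fin d) :
    predual V (Matrix.single a b (1 : ℂ)) c e
      = ∑ j : Fin k, V (c, j) a * star (V (e, j) b) := by
  classical
  simp only [predual, Matrix.sum_apply, Matrix.mul_apply, Matrix.conjTranspose_apply,
    Matrix.single, Matrix.of_apply, kraus, blk, mul_ite, ite_mul, mul_one, mul_zero,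
    zero_mul, one_mul]
  refine Finset.sum_congr rfl fun j _ => ?_
  simp [Finset.sum_ite_eq, Finset.sum_ite_eq', ite_and, Finset.sum_ite_irrel]

lemma toMatrix_predual_eq_conjTranspose (V : Matrix (Fin d × Fin k) (Fin d) ℂ) :
    LinearMap.toMatrix (matBasis d) (matBasis d) (LinearMap.id - predualL V)
      = (LinearMap.toMatrix (matBasis d) (matBasis d) (LinearMap.id - chanL V))ᴴ := by
  classical
  ext p q
  rw [Matrix.conjTranspose_apply, LinearMap.toMatrix_apply, LinearMap.toMatrix_apply,
    matBasis_repr, matBasis_repr, matBasis_apply, matBasis_apply]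
  simp only [LinearMap.sub_apply, LinearMap.id_apply, predualL_apply, chanL_apply,
    Matrix.sub_apply]
  rw [predual_entry, chan_entry]
  simp only [star_sub, star_sum, star_mul', star_star]
  congr 1 <;>
    first
      | (exact Finset.sum_congr rfl fun j _ => by ring)
      | (rcases p with ⟨p1, p2⟩
         rcases q with ⟨q1, q2⟩
         simp only [Matrix.single, Matrix.of_apply, apply_ite (star : ℂ → ℂ),
           star_one, star_zero]
         by_cases hA : q1 = p1 ∧ q2 = p2
         · obtain ⟨rfl, rfl⟩ := hA
           simp
         · rw [if_neg hA, if_neg (fun hB => hA ⟨hB.1.symm, hB.2.symm⟩)])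

lemma finrank_ker_eq (V : Matrix (Fin d × Fin k) (Fin d) ℂ) :
    Module.finrank ℂ (LinearMap.ker (LinearMap.id - chanL V))
      = Module.finrank ℂ (LinearMap.ker (LinearMap.id - predualL V)) := by
  classical
  set b := matBasis d
  set f := LinearMap.id - chanL V with hf
  set g := LinearMap.id - predualL V with hg
  have hrank : (LinearMap.toMatrix b b f).rank = (LinearMap.toMatrix b b g).rank := by
    rw [toMatrix_predual_eq_conjTranspose, Matrix.rank_conjTranspose]
  have h1 : (LinearMap.toMatrix b b f).rank = Module.finrank ℂ (LinearMap.range f) := by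
    rw [Matrix.rank_eq_finrank_range_toLin _ b b, Matrix.toLin_toMatrix]
  have h2 : (LinearMap.toMatrix b b g).rank = Module.finrank ℂ (LinearMap.range g) := by
    rw [Matrix.rank_eq_finrank_range_toLin _ b b, Matrix.toLin_toMatrix]
  have h3 := LinearMap.finrank_range_add_finrank_ker f
  have h4 := LinearMap.finrank_range_add_finrank_ker g
  omega

end Aux3

end QMCPaper

namespace QMCPaper

/-- fixed points of the transition channel are trivial, and
`Id − T_V` is a bijection of the hyperplane `{X : tr(ρˢˢ X) = 0}` onto itself. -/
theorem fixed_points_and_inverse {d k : ℕ}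
    (V : Matrix (Fin d × Fin k) (Fin d) ℂ) (ρss : Matrix (Fin d) (Fin d) ℂ)
    (h : IsIrreducible V ρss) :
    -- (a) trivial fixed point space
    (∀ X : Matrix (Fin d) (Fin d) ℂ, chan V X = X →
      ∃ c : ℂ, X = c • (1 : Matrix (Fin d) (Fin d) ℂ)) ∧
    -- (b) `Id − T_V` maps `S = {X : tr(ρˢˢ X) = 0}` into itself …
    (∀ X : Matrix (Fin d) (Fin d) ℂ, (ρss * X).trace = 0 →
      (ρss * (X - chan V X)).trace = 0) ∧
    -- … bijectively
    (∀ Y : Matrix (Fin d) (Fin d) ℂ, (ρss * Y).trace = 0 →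
      ∃! X : Matrix (Fin d) (Fin d) ℂ, (ρss * X).trace = 0 ∧ X - chan V X = Y) := by
  classical
  obtain ⟨hV, ⟨hpsd, htr⟩, hfixss, hpd, huniq⟩ := h
  have h' : IsIrreducible V ρss := ⟨hV, ⟨hpsd, htr⟩, hfixss, hpd, huniq⟩
  -- ρss ≠ 0
  have hρne : ρss ≠ 0 := by
    intro h0
    rw [h0] at htr
    simp at htr
  -- the trace functional with respect to ρss
  -- key trace identity: tr(ρss · (X - chan V X)) = 0 for all X
  have key : ∀ X : Matrix (Fin d) (Fin d) ℂ, (ρss * (X - chan V X)).trace = 0 := by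
    intro X
    rw [Matrix.mul_sub, Matrix.trace_sub, trace_chan, hfixss, sub_self]
  -- kernel of Id - predualL is spanned by ρss
  have hkerpred : LinearMap.ker (LinearMap.id - predualL V)
      = Submodule.span ℂ {ρss} := by
    apply le_antisymm
    · intro Y hY
      rw [LinearMap.mem_ker, LinearMap.sub_apply, LinearMap.id_apply, predualL_apply,
        sub_eq_zero] at hY
      obtain ⟨c, hc⟩ := predual_fixed h' hY.symm
      rw [Submodule.mem_span_singleton]
      exact ⟨c, hc.symm⟩
    · rw [Submodule.span_singleton_le_iff_mem, LinearMap.mem_ker, LinearMap.sub_apply,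
        LinearMap.id_apply, predualL_apply, hfixss, sub_self]
  have hfr1 : Module.finrank ℂ (LinearMap.ker (LinearMap.id - predualL V)) = 1 := by
    rw [hkerpred]
    exact finrank_span_singleton hρne
  have hfr2 : Module.finrank ℂ
      (LinearMap.ker (LinearMap.id - chanL (d := d) (k := k) V)) = 1 := by
    rw [finrank_ker_eq, hfr1]
  -- 1 is in the kernel of Id - chanL
  have hone : (1 : Matrix (Fin d) (Fin d) ℂ) ∈
      LinearMap.ker (LinearMap.id - chanL (d := d) (k := k) V) := by
    rw [LinearMap.mem_ker, LinearMap.sub_apply, LinearMap.id_apply, chanL_apply,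
      chan_one V hV, sub_self]
  have honene : (1 : Matrix (Fin d) (Fin d) ℂ) ≠ 0 := by
    intro h0
    have hd : d ≠ 0 := by
      rintro rfl
      rw [show ρss = 0 by ext i j; exact i.elim0] at htr
      simp at htr
    obtain ⟨i, _⟩ := Fin.pos_iff_nonempty.mp (Nat.pos_of_ne_zero hd)
    have := congrFun (congrFun h0 ⟨i, by omega⟩) ⟨i, by omega⟩
    simp [Matrix.one_apply] at this
  have hkerchan : LinearMap.ker (LinearMap.id - chanL (d := d) (k := k) V)
      = Submodule.span ℂ {(1 : Matrix (Fin d) (Fin d) ℂ)} := by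
    refine (Submodule.eq_of_le_of_finrank_le
      ((Submodule.span_singleton_le_iff_mem _ _).mpr hone) ?_).symm
    rw [hfr2, finrank_span_singleton honene]
  -- part (a)
  have parta : ∀ X : Matrix (Fin d) (Fin d) ℂ, chan V X = X →
      ∃ c : ℂ, X = c • (1 : Matrix (Fin d) (Fin d) ℂ) := by
    intro X hX
    have : X ∈ LinearMap.ker (LinearMap.id - chanL (d := d) (k := k) V) := by
      rw [LinearMap.mem_ker, LinearMap.sub_apply, LinearMap.id_apply, chanL_apply, hX,
        sub_self]
    rw [hkerchan, Submodule.mem_span_singleton] at this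
    obtain ⟨c, hc⟩ := this
    exact ⟨c, hc.symm⟩
  refine ⟨parta, fun X _ => key X, ?_⟩
  -- part (c)
  intro Y hY
  -- the trace functional
  set φ : Matrix (Fin d) (Fin d) ℂ →ₗ[ℂ] ℂ :=
    { toFun := fun X => (ρss * X).trace
      map_add' := fun X Y => by simp [Matrix.mul_add]
      map_smul' := fun c X => by simp [Matrix.mul_smul] } with hφdef
  have hφ : ∀ X, φ X = (ρss * X).trace := fun _ => rfl
  set L : Matrix (Fin d) (Fin d) ℂ →ₗ[ℂ] Matrix (Fin d) (Fin d) ℂ :=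
    LinearMap.id - chanL V with hLdef
  have hL : ∀ X, L X = X - chan V X := fun _ => rfl
  have hmaps : ∀ X, X ∈ LinearMap.ker φ → L X ∈ LinearMap.ker φ := by
    intro X _
    rw [LinearMap.mem_ker, hφ, hL]
    exact key X
  set Lres : LinearMap.ker φ →ₗ[ℂ] LinearMap.ker φ := L.restrict hmaps with hLres
  have hinj : Function.Injective Lres := by
    rw [← LinearMap.ker_eq_bot]
    rw [LinearMap.ker_eq_bot']
    intro m hm
    have hmval : L m.1 = 0 := congrArg Subtype.val hm
    rw [hL, sub_eq_zero] at hmval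
    obtain ⟨c, hc⟩ := parta m.1 hmval.symm
    have hm2 : φ m.1 = 0 := m.2
    rw [hc] at hm2
    rw [hφ] at hm2
    rw [Matrix.mul_smul, Matrix.trace_smul, Matrix.mul_one, htr] at hm2
    simp only [smul_eq_mul, mul_one] at hm2
    ext
    rw [hc, hm2, zero_smul]
    rfl
  have hsurj : Function.Surjective Lres :=
    (LinearMap.injective_iff_surjective_of_finrank_eq_finrank rfl).mp hinj
  obtain ⟨X, hX⟩ := hsurj ⟨Y, by rw [LinearMap.mem_ker, hφ]; exact hY⟩
  have hXval : L X.1 = Y := congrArg Subtype.val hX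
  refine ⟨X.1, ⟨X.2, by rw [← hL]; exact hXval⟩, ?_⟩
  intro X' ⟨hX'S, hX'eq⟩
  have hX'mem : X' ∈ LinearMap.ker φ := by rw [LinearMap.mem_ker, hφ]; exact hX'S
  have : Lres ⟨X', hX'mem⟩ = Lres X := by
    apply Subtype.ext
    show L X' = L X.1
    rw [hL, hL, hX'eq]
    rw [← hL, hXval]
  have := hinj this
  exact congrArg Subtype.val this


end QMCPaper
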